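/- Let Ω, Ω* be compact metric spaces with Ω nonempty, let c : Ω × Ω* → ℝ be continuous, let ε > 0, let α be a nonzero finite positive Borel measure on Ω, and let ν be a Borel probability measure on Ω*. Define the soft c-transform L_{c,ε}(φ)(y) = ε · log(∫_Ω exp((φ(x) − c(x, y))/ε) dα(x)) and K_ε : C(Ω, ℝ) → ℝ by K_ε(φ) = ∫_{Ω*} L_{c,ε}(φ)(y) dν(y). Then: (1) K_ε is submodular, i.e. K_ε(φ₁ ⊓ φ₂) + K_ε(φ₁ ⊔ φ₂) ≤ K_ε(φ₁) + K_ε(φ₂) for all φ₁, φ₂ ∈ C(Ω, ℝ) with ⊓, ⊔ the pointwise min and max; (2) K_ε is convex; (3) K_ε is 1-Lipschitz for the supremum norm. -/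

import Mathlib

open MeasureTheory

/-- The entropic dual functional
`K_ε(φ) = ∫ L_{c,ε}(φ) dν`, where
`L_{c,ε}(φ)(y) = ε log (∫ exp ((φ x − c (x, y)) / ε) dα x)` is the soft
c-transform, is submodular, convex and 1-Lipschitz on `C(Ω, ℝ)`. -/
theorem softCTransform_functional_submodular_convex_lipschitz
    {Ω Ωs : Type*} [MetricSpace Ω] [CompactSpace Ω] [Nonempty Ω]
    [MeasurableSpace Ω] [BorelSpace Ω]
    [MetricSpace Ωs] [CompactSpace Ωs] [MeasurableSpace Ωs] [BorelSpace Ωs]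
    (c : Ω × Ωs → ℝ) (hc : Continuous c)
    (ε : ℝ) (hε : 0 < ε)
    (α : Measure Ω) [IsFiniteMeasure α] (hα : α ≠ 0)
    (ν : Measure Ωs) [IsProbabilityMeasure ν]
    (Kε : C(Ω, ℝ) → ℝ)
    (hKε : ∀ φ : C(Ω, ℝ),
      Kε φ = ∫ y, ε * Real.log (∫ x, Real.exp ((φ x - c (x, y)) / ε) ∂α) ∂ν) :
    (∀ φ₁ φ₂ : C(Ω, ℝ), Kε (φ₁ ⊓ φ₂) + Kε (φ₁ ⊔ φ₂) ≤ Kε φ₁ + Kε φ₂) ∧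
      ConvexOn ℝ Set.univ Kε ∧
      (∀ φ₁ φ₂ : C(Ω, ℝ), |Kε φ₁ - Kε φ₂| ≤ ‖φ₁ - φ₂‖) := by
  set A : C(Ω, ℝ) → Ωs → ℝ :=
    fun φ y => ∫ x, Real.exp ((φ x - c (x, y)) / ε) ∂α with hA
  have hαu : 0 < α Set.univ := Measure.measure_univ_pos.mpr hα
  have hgy : ∀ (φ : C(Ω, ℝ)) (y : Ωs),
      Continuous (fun x => Real.exp ((φ x - c (x, y)) / ε)) := by
    intro φ y
    exact ((φ.continuous.sub (hc.comp (Continuous.prodMk_left y))).div_const ε).rexp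
  have hint : ∀ (φ : C(Ω, ℝ)) (y : Ωs),
      Integrable (fun x => Real.exp ((φ x - c (x, y)) / ε)) α := fun φ y =>
    (hgy φ y).integrable_of_hasCompactSupport (HasCompactSupport.of_compactSpace _)
  have hApos : ∀ (φ : C(Ω, ℝ)) (y : Ωs), 0 < A φ y := by
    intro φ y
    rw [hA]
    refine (integral_pos_iff_support_of_nonneg
      (fun x => (Real.exp_pos _).le) (hint φ y)).mpr ?_
    have hs : Function.support (fun x => Real.exp ((φ x - c (x, y)) / ε))
        = Set.univ := by
      ext x; simp [(Real.exp_pos _).ne']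
    rw [hs]; exact hαu
  have hAcont : ∀ φ : C(Ω, ℝ), Continuous (A φ) := by
    intro φ
    have h := continuous_parametric_integral_of_continuous (μ := α)
      (f := fun (y : Ωs) (x : Ω) => Real.exp ((φ x - c (x, y)) / ε))
      (by
        have : Continuous fun p : Ωs × Ω =>
            Real.exp ((φ p.2 - c (p.2, p.1)) / ε) := by
          exact ((φ.continuous.comp continuous_snd |>.sub
            (hc.comp (continuous_snd.prodMk continuous_fst))).div_const ε).rexp
        exact this)
      (isCompact_univ (X := Ω))
    simpa [Measure.restrict_univ] using h
  have hLcont : ∀ φ : C(Ω, ℝ), Continuous (fun y => ε * Real.log (A φ y)) :=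
    fun φ => continuous_const.mul ((hAcont φ).log (fun y => (hApos φ y).ne'))
  have hLint : ∀ φ : C(Ω, ℝ), Integrable (fun y => ε * Real.log (A φ y)) ν :=
    fun φ => (hLcont φ).integrable_of_hasCompactSupport
      (HasCompactSupport.of_compactSpace _)
  have hKA : ∀ φ : C(Ω, ℝ), Kε φ = ∫ y, ε * Real.log (A φ y) ∂ν := hKε
  refine ⟨?_, ?_, ?_⟩
  · -- Submodularity
    intro φ₁ φ₂
    have key : ∀ y, ε * Real.log (A (φ₁ ⊓ φ₂) y) + ε * Real.log (A (φ₁ ⊔ φ₂) y)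
        ≤ ε * Real.log (A φ₁ y) + ε * Real.log (A φ₂ y) := by
      intro y
      have hsum : A (φ₁ ⊓ φ₂) y + A (φ₁ ⊔ φ₂) y = A φ₁ y + A φ₂ y := by
        rw [hA, ← integral_add (hint _ y) (hint _ y),
          ← integral_add (hint _ y) (hint _ y)]
        refine integral_congr_ae (Filter.Eventually.of_forall fun x => ?_)
        have h1 : (φ₁ ⊓ φ₂) x = min (φ₁ x) (φ₂ x) := rfl
        have h2 : (φ₁ ⊔ φ₂) x = max (φ₁ x) (φ₂ x) := rfl
        rcases le_total (φ₁ x) (φ₂ x) with h | h <;>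
          simp [h1, h2, min_eq_left, min_eq_right, max_eq_left, max_eq_right, h] <;>
          ring
      have hle1 : A (φ₁ ⊓ φ₂) y ≤ A φ₁ y := by
        refine integral_mono (hint _ y) (hint _ y) fun x => ?_
        have : (φ₁ ⊓ φ₂) x ≤ φ₁ x := min_le_left _ _
        exact Real.exp_le_exp.mpr (by gcongr)
      have hle2 : A (φ₁ ⊓ φ₂) y ≤ A φ₂ y := by
        refine integral_mono (hint _ y) (hint _ y) fun x => ?_
        have : (φ₁ ⊓ φ₂) x ≤ φ₂ x := min_le_right _ _
        exact Real.exp_le_exp.mpr (by gcongr)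
      have hprod : A (φ₁ ⊓ φ₂) y * A (φ₁ ⊔ φ₂) y ≤ A φ₁ y * A φ₂ y := by
        nlinarith [hApos (φ₁ ⊓ φ₂) y, hApos (φ₁ ⊔ φ₂) y, hApos φ₁ y, hApos φ₂ y]
      have hlog := Real.log_le_log (mul_pos (hApos (φ₁ ⊓ φ₂) y)
        (hApos (φ₁ ⊔ φ₂) y)) hprod
      rw [Real.log_mul (hApos (φ₁ ⊓ φ₂) y).ne' (hApos (φ₁ ⊔ φ₂) y).ne',
        Real.log_mul (hApos φ₁ y).ne' (hApos φ₂ y).ne'] at hlog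
      nlinarith [hlog, hε]
    rw [hKA, hKA, hKA, hKA, ← integral_add (hLint _) (hLint _),
      ← integral_add (hLint _) (hLint _)]
    exact integral_mono ((hLint _).add (hLint _)) ((hLint _).add (hLint _)) key
  · -- Convexity
    refine ⟨convex_univ, ?_⟩
    intro φ₁ _ φ₂ _ a b ha hb hab
    rcases eq_or_lt_of_le ha with rfl | ha'
    · have hb1 : b = 1 := by linarith
      subst hb1
      simp
    rcases eq_or_lt_of_le hb with rfl | hb'
    · have ha1 : a = 1 := by linarith
      subst ha1
      simp
    have ha1 : a < 1 := by linarith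
    have hpq : (1 / a).HolderConjugate (1 / b) := by
      constructor
      · simp only [one_div, inv_inv, inv_one]; exact hab
      · exact one_div_pos.mpr ha'
      · exact one_div_pos.mpr hb'
    have key : ∀ y, ε * Real.log (A (a • φ₁ + b • φ₂) y)
        ≤ a * (ε * Real.log (A φ₁ y)) + b * (ε * Real.log (A φ₂ y)) := by
      intro y
      set f : Ω → ℝ := fun x => Real.exp (a * ((φ₁ x - c (x, y)) / ε)) with hf
      set g : Ω → ℝ := fun x => Real.exp (b * ((φ₂ x - c (x, y)) / ε)) with hg
      have hfc : Continuous f :=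
        (continuous_const.mul ((φ₁.continuous.sub
          (hc.comp (Continuous.prodMk_left y))).div_const ε)).rexp
      have hgc : Continuous g :=
        (continuous_const.mul ((φ₂.continuous.sub
          (hc.comp (Continuous.prodMk_left y))).div_const ε)).rexp
      have hfm : MemLp f (ENNReal.ofReal (1 / a)) α :=
        hfc.memLp_of_hasCompactSupport (HasCompactSupport.of_compactSpace _)
      have hgm : MemLp g (ENNReal.ofReal (1 / b)) α :=
        hgc.memLp_of_hasCompactSupport (HasCompactSupport.of_compactSpace _)
      have hH := integral_mul_le_Lp_mul_Lq_of_nonneg hpq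
        (Filter.Eventually.of_forall fun x => (Real.exp_pos _).le)
        (Filter.Eventually.of_forall fun x => (Real.exp_pos _).le) hfm hgm
      have hfg : ∀ x, f x * g x = Real.exp (((a • φ₁ + b • φ₂) x - c (x, y)) / ε) := by
        intro x
        rw [hf, hg, ← Real.exp_add]
        congr 1
        have hx : (a • φ₁ + b • φ₂) x = a * φ₁ x + b * φ₂ x := rfl
        rw [hx]
        linear_combination (-(c (x, y)) / ε) * hab
      have hfp : ∀ x, f x ^ (1 / a) = Real.exp ((φ₁ x - c (x, y)) / ε) := by
        intro x
        rw [hf, ← Real.exp_mul]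
        congr 1
        field_simp
      have hgq : ∀ x, g x ^ (1 / b) = Real.exp ((φ₂ x - c (x, y)) / ε) := by
        intro x
        rw [hg, ← Real.exp_mul]
        congr 1
        field_simp
      have hLHS : ∫ x, f x * g x ∂α = A (a • φ₁ + b • φ₂) y := by
        rw [hA]; exact integral_congr_ae (Filter.Eventually.of_forall fun x => hfg x)
      have hRf : ∫ x, f x ^ (1 / a) ∂α = A φ₁ y := by
        rw [hA]; exact integral_congr_ae (Filter.Eventually.of_forall fun x => hfp x)
      have hRg : ∫ x, g x ^ (1 / b) ∂α = A φ₂ y := by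
        rw [hA]; exact integral_congr_ae (Filter.Eventually.of_forall fun x => hgq x)
      rw [hLHS, hRf, hRg] at hH
      have h1a : 1 / (1 / a) = a := one_div_one_div a
      have h1b : 1 / (1 / b) = b := one_div_one_div b
      rw [h1a, h1b] at hH
      have hlog := Real.log_le_log (hApos (a • φ₁ + b • φ₂) y) hH
      rw [Real.log_mul (Real.rpow_pos_of_pos (hApos φ₁ y) a).ne'
          (Real.rpow_pos_of_pos (hApos φ₂ y) b).ne',
        Real.log_rpow (hApos φ₁ y), Real.log_rpow (hApos φ₂ y)] at hlog
      nlinarith [hlog, hε]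
    calc Kε (a • φ₁ + b • φ₂)
        = ∫ y, ε * Real.log (A (a • φ₁ + b • φ₂) y) ∂ν := hKA _
      _ ≤ ∫ y, (a * (ε * Real.log (A φ₁ y)) + b * (ε * Real.log (A φ₂ y))) ∂ν :=
          integral_mono (hLint _)
            (((hLint φ₁).const_mul a).add ((hLint φ₂).const_mul b)) key
      _ = a • Kε φ₁ + b • Kε φ₂ := by
          rw [integral_add ((hLint φ₁).const_mul a) ((hLint φ₂).const_mul b),
            integral_const_mul a (fun y => ε * Real.log (A φ₁ y)),
            integral_const_mul b (fun y => ε * Real.log (A φ₂ y)), hKA, hKA,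
            smul_eq_mul, smul_eq_mul]
  · -- 1-Lipschitz
    intro φ₁ φ₂
    have key : ∀ (ψ₁ ψ₂ : C(Ω, ℝ)) (y : Ωs),
        ε * Real.log (A ψ₁ y) - ε * Real.log (A ψ₂ y) ≤ ‖ψ₁ - ψ₂‖ := by
      intro ψ₁ ψ₂ y
      have hble : A ψ₁ y ≤ Real.exp (‖ψ₁ - ψ₂‖ / ε) * A ψ₂ y := by
        rw [hA, ← integral_const_mul]
        refine integral_mono (hint _ _) ((hint _ _).const_mul _) fun x => ?_
        rw [← Real.exp_add]
        refine Real.exp_le_exp.mpr ?_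
        have hd : ψ₁ x - ψ₂ x ≤ ‖ψ₁ - ψ₂‖ := by
          calc ψ₁ x - ψ₂ x = (ψ₁ - ψ₂) x := rfl
            _ ≤ |(ψ₁ - ψ₂) x| := le_abs_self _
            _ = ‖(ψ₁ - ψ₂) x‖ := rfl
            _ ≤ ‖ψ₁ - ψ₂‖ := (ψ₁ - ψ₂).norm_coe_le_norm x
        rw [← add_div]
        gcongr
        linarith
      have hlog := Real.log_le_log (hApos ψ₁ y) hble
      rw [Real.log_mul (Real.exp_pos _).ne' (hApos ψ₂ y).ne', Real.log_exp] at hlog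
      have hmul := mul_le_mul_of_nonneg_left hlog hε.le
      rw [mul_add, mul_div_cancel₀ _ hε.ne'] at hmul
      linarith
    rw [abs_sub_le_iff]
    constructor
    · rw [hKA, hKA, ← integral_sub (hLint _) (hLint _)]
      calc ∫ y, (ε * Real.log (A φ₁ y) - ε * Real.log (A φ₂ y)) ∂ν
          ≤ ∫ _, ‖φ₁ - φ₂‖ ∂ν :=
            integral_mono ((hLint _).sub (hLint _)) (integrable_const _)
              (fun y => key φ₁ φ₂ y)
        _ = ‖φ₁ - φ₂‖ := by simp
    · rw [hKA, hKA, ← integral_sub (hLint _) (hLint _)]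
      calc ∫ y, (ε * Real.log (A φ₂ y) - ε * Real.log (A φ₁ y)) ∂ν
          ≤ ∫ _, ‖φ₂ - φ₁‖ ∂ν :=
            integral_mono ((hLint _).sub (hLint _)) (integrable_const _)
              (fun y => key φ₂ φ₁ y)
        _ = ‖φ₂ - φ₁‖ := by simp
        _ = ‖φ₁ - φ₂‖ := norm_sub_rev _ _
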